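/- Let H be as in the context (a real vector space with a symmetric bilinear form φ of signature (p,·)). Let x, y, z be p-tuples of vectors of H, each of which is a basis of a p-dimensional subspace on which φ is positive definite. If G(x,y) > 0 and G(x,z) > 0, then G(y,z) > 0. -/

import Mathlib

open Matrix Submodule Set

section aux

variable {H : Type*} [AddCommGroup H] [Module ℝ H]

private lemma bilin_sum_left (φ : LinearMap.BilinForm ℝ H) {m : ℕ} (c : Fin m → ℝ)
    (x : Fin m → H) (w : H) :
    φ (∑ i, c i • x i) w = ∑ i, c i * φ (x i) w := by
  simp [map_sum, LinearMap.sum_apply, _root_.map_smul, smul_eq_mul]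

private lemma bilin_sum_right (φ : LinearMap.BilinForm ℝ H) {m : ℕ} (c : Fin m → ℝ)
    (x : Fin m → H) (w : H) :
    φ w (∑ i, c i • x i) = ∑ i, c i * φ w (x i) := by
  simp [map_sum, _root_.map_smul, smul_eq_mul]

/-- Any tuple on whose coefficient combinations φ is positive has length ≤ p. -/
private lemma aux_card_le (φ : LinearMap.BilinForm ℝ H) (p : ℕ)
    (Hplus Hminus : Submodule ℝ H) (hcompl : IsCompl Hplus Hminus)
    (hplusdim : Module.finrank ℝ Hplus = p) [FiniteDimensional ℝ Hplus]
    (hnegdef : ∀ v ∈ Hminus, v ≠ 0 → φ v v < 0)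
    {m : ℕ} (f : Fin m → H)
    (hf : ∀ c : Fin m → ℝ, c ≠ 0 → 0 < φ (∑ i, c i • f i) (∑ i, c i • f i)) :
    m ≤ p := by
  set P := Hplus.linearProjOfIsCompl Hminus hcompl with hP
  have hg : LinearIndependent ℝ (fun i => P (f i)) := by
    rw [Fintype.linearIndependent_iff]
    intro c hc
    by_contra hcc
    push_neg at hcc
    obtain ⟨i, hi⟩ := hcc
    have hc0 : c ≠ 0 := fun h => hi (by rw [h]; rfl)
    have hv : 0 < φ (∑ i, c i • f i) (∑ i, c i • f i) := hf c hc0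
    set v := ∑ i, c i • f i with hvdef
    have hPv : P v = 0 := by
      rw [hvdef, map_sum]
      simpa [_root_.map_smul] using hc
    have hvm : v ∈ Hminus := (Submodule.linearProjOfIsCompl_apply_eq_zero_iff hcompl).mp hPv
    rcases eq_or_ne v 0 with h0 | h0
    · rw [h0] at hv; simp at hv
    · exact absurd hv (not_lt.mpr (hnegdef v hvm h0).le)
  have := hg.fintype_card_le_finrank
  simpa [hplusdim] using this

/-- The cross Gram determinant of two positive tuples is nonzero. -/
private lemma aux_det_ne_zero (φ : LinearMap.BilinForm ℝ H)
    (hφsymm : ∀ u v, φ u v = φ v u) (p : ℕ)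
    (Hplus Hminus : Submodule ℝ H) (hcompl : IsCompl Hplus Hminus)
    (hplusdim : Module.finrank ℝ Hplus = p) [FiniteDimensional ℝ Hplus]
    (hnegdef : ∀ v ∈ Hminus, v ≠ 0 → φ v v < 0)
    (x y : Fin p → H)
    (hx : ∀ c : Fin p → ℝ, c ≠ 0 → 0 < φ (∑ i, c i • x i) (∑ i, c i • x i))
    (hy : ∀ c : Fin p → ℝ, c ≠ 0 → 0 < φ (∑ i, c i • y i) (∑ i, c i • y i)) :
    Matrix.det (Matrix.of fun i j => φ (x i) (y j)) ≠ 0 := by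
  intro hdet
  set M : Matrix (Fin p) (Fin p) ℝ := Matrix.of fun i j => φ (x i) (y j) with hM
  have hdetT : Mᵀ.det = 0 := by rw [Matrix.det_transpose]; exact hdet
  obtain ⟨c, hc0, hcv⟩ := (Matrix.exists_mulVec_eq_zero_iff).mpr hdetT
  set u := ∑ i, c i • x i with hu
  have huy : ∀ j, φ u (y j) = 0 := by
    intro j
    have := congrFun hcv j
    rw [hu, bilin_sum_left]
    simpa [Matrix.mulVec, dotProduct, hM, mul_comm] using this
  have huu : 0 < φ u u := hx c hc0
  -- φ u of any combination of y is zero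
  have huw : ∀ d : Fin p → ℝ, φ u (∑ j, d j • y j) = 0 := by
    intro d; rw [bilin_sum_right]; simp [huy]
  -- build the (p+1)-tuple y followed by u
  set g : Fin (p + 1) → H := Fin.snoc y u with hg
  have hgpos : ∀ c' : Fin (p + 1) → ℝ, c' ≠ 0 →
      0 < φ (∑ i, c' i • g i) (∑ i, c' i • g i) := by
    intro c' hc'
    set d : Fin p → ℝ := fun i => c' i.castSucc with hd
    set lam : ℝ := c' (Fin.last p) with hlam
    set w : H := ∑ i, d i • y i with hw
    have hsum : ∑ i, c' i • g i = w + lam • u := by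
      rw [Fin.sum_univ_castSucc]
      simp [hg, Fin.snoc_castSucc, Fin.snoc_last, hw, hd, hlam]
    have hwu : φ u w = 0 := huw d
    have hexp : φ (w + lam • u) (w + lam • u)
        = φ w w + lam * φ w u + (lam * φ u w + lam * lam * φ u u) := by
      simp [map_add, _root_.map_smul, smul_eq_mul]; ring
    have hval : φ (∑ i, c' i • g i) (∑ i, c' i • g i) = φ w w + lam * lam * φ u u := by
      rw [hsum, hexp, hφsymm w u, hwu]; ring
    rw [hval]
    rcases eq_or_ne lam 0 with h0 | h0
    · have hdne : d ≠ 0 := by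
        intro hdz
        apply hc'
        funext i
        cases i using Fin.lastCases with
        | last => exact h0
        | cast i => exact congrFun hdz i
      have := hy d hdne
      rw [h0]; rw [← hw] at this; linarith
    · have h1 : 0 < lam * lam * φ u u := mul_pos (mul_self_pos.mpr h0) huu
      have h2 : 0 ≤ φ w w := by
        rcases eq_or_ne d 0 with hdz | hdz
        · simp [hw, hdz]
        · exact (hy d hdz).le
      linarith
  have := aux_card_le φ p Hplus Hminus hcompl hplusdim hnegdef g hgpos
  omega

private lemma aux_ivt {f : ℝ → ℝ} (hf : Continuous f)
    (h : ∀ t ∈ Set.Icc (0 : ℝ) 1, f t ≠ 0) : 0 < f 0 * f 1 := by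
  rcases lt_trichotomy (f 0 * f 1) 0 with hlt | heq | hgt
  · exfalso
    have h0 : (0 : ℝ) ∈ Set.uIcc (f 0) (f 1) := by
      rcases mul_neg_iff.mp hlt with ⟨ha, hb⟩ | ⟨ha, hb⟩
      · exact Set.mem_uIcc.mpr (Or.inr ⟨hb.le, ha.le⟩)
      · exact Set.mem_uIcc.mpr (Or.inl ⟨ha.le, hb.le⟩)
    obtain ⟨t, ht, hft⟩ := intermediate_value_uIcc hf.continuousOn h0
    rw [Set.uIcc_of_le (zero_le_one' ℝ)] at ht
    exact h t ht hft
  · exfalso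
    rcases mul_eq_zero.mp heq with h0 | h1
    · exact h 0 (by norm_num) h0
    · exact h 1 (by norm_num) h1
  · exact hgt

end aux

section main

variable {H : Type*} [AddCommGroup H] [Module ℝ H]

private lemma pos_of_pos_mul {a b : ℝ} (ha : 0 < a) (hab : 0 < a * b) : 0 < b := by
  by_contra h
  push_neg at h
  nlinarith

/-- positivity along the deformation -/
private lemma aux_pt (φ : LinearMap.BilinForm ℝ H) (hφsymm : ∀ u v, φ u v = φ v u)
    (Hplus Hminus : Submodule ℝ H)
    (horth : ∀ u ∈ Hplus, ∀ v ∈ Hminus, φ u v = 0)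
    (hnegdef : ∀ v ∈ Hminus, v ≠ 0 → φ v v < 0)
    (A : H →ₗ[ℝ] H) (hA1 : ∀ v, A v ∈ Hplus) (hA2 : ∀ v, v - A v ∈ Hminus)
    {t : ℝ} (ht : t ∈ Set.Icc (0 : ℝ) 1) (v : H) (hv : 0 < φ v v) :
    0 < φ (A v + t • (v - A v)) (A v + t • (v - A v)) := by
  set w := A v with hwdef
  set q := v - A v with hqdef
  have hqq : φ q q ≤ 0 := by
    rcases eq_or_ne q 0 with h0 | h0
    · simp [h0]
    · exact (hnegdef q (hA2 v) h0).le
  have hwq : φ w q = 0 := horth w (hA1 v) q (hA2 v)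
  have hqw : φ q w = 0 := by rw [hφsymm]; exact hwq
  have hsplit : ∀ s : ℝ, φ (w + s • q) (w + s • q) = φ w w + s * s * φ q q := by
    intro s
    simp only [map_add, _root_.map_smul, LinearMap.add_apply, LinearMap.smul_apply,
      smul_eq_mul, hwq, hqw]
    ring
  have hv1 : v = w + (1 : ℝ) • q := by simp [hwdef, hqdef]
  have hfv : φ v v = φ w w + 1 * 1 * φ q q := by rw [hv1]; exact hsplit 1
  rw [hsplit t]
  obtain ⟨ht0, ht1⟩ := ht
  have htt : t * t ≤ 1 := by nlinarith
  have hmul : 1 * φ q q ≤ t * t * φ q q := mul_le_mul_of_nonpos_right htt hqq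
  linarith

private lemma aux_deform (φ : LinearMap.BilinForm ℝ H)
    (hφsymm : ∀ u v, φ u v = φ v u) (p : ℕ)
    (Hplus Hminus : Submodule ℝ H) (hcompl : IsCompl Hplus Hminus)
    (horth : ∀ u ∈ Hplus, ∀ v ∈ Hminus, φ u v = 0)
    (hplusdim : Module.finrank ℝ Hplus = p) [FiniteDimensional ℝ Hplus]
    (hnegdef : ∀ v ∈ Hminus, v ≠ 0 → φ v v < 0)
    (A : H →ₗ[ℝ] H) (hA1 : ∀ v, A v ∈ Hplus) (hA2 : ∀ v, v - A v ∈ Hminus)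
    (x y : Fin p → H)
    (hx : ∀ c : Fin p → ℝ, c ≠ 0 → 0 < φ (∑ i, c i • x i) (∑ i, c i • x i))
    (hy : ∀ c : Fin p → ℝ, c ≠ 0 → 0 < φ (∑ i, c i • y i) (∑ i, c i • y i)) :
    0 < Matrix.det (Matrix.of fun i j => φ (x i) (y j)) *
        Matrix.det (Matrix.of fun i j => φ (A (x i)) (y j)) := by
  set L : ℝ → H →ₗ[ℝ] H := fun t => A + t • (LinearMap.id - A) with hL
  have hLapp : ∀ t v, L t v = A v + t • (v - A v) := by
    intro t v; simp [hL]
  set f : ℝ → ℝ := fun t => Matrix.det (Matrix.of fun i j => φ (L t (x i)) (y j)) with hf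
  have hcont : Continuous f := by
    have hfe : f = fun t => Matrix.det (Matrix.of fun i j =>
        φ (A (x i)) (y j) + t * φ (x i - A (x i)) (y j)) := by
      funext t
      refine congrArg Matrix.det (Matrix.ext fun i j => ?_)
      rw [Matrix.of_apply, Matrix.of_apply, hLapp]
      simp [map_add, _root_.map_smul, smul_eq_mul]
    rw [hfe]
    apply Continuous.matrix_det
    exact continuous_pi fun i => continuous_pi fun j =>
      continuous_const.add ((continuous_mul_right _).comp continuous_id)
  have hxl : ∀ t ∈ Set.Icc (0 : ℝ) 1, ∀ c : Fin p → ℝ, c ≠ 0 →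
      0 < φ (∑ i, c i • L t (x i)) (∑ i, c i • L t (x i)) := by
    intro t ht c hc
    have hsum : ∑ i, c i • L t (x i) = L t (∑ i, c i • x i) := by
      rw [map_sum]
      exact Finset.sum_congr rfl fun i _ => (_root_.map_smul (L t) (c i) (x i)).symm
    rw [hsum, hLapp]
    exact aux_pt φ hφsymm Hplus Hminus horth hnegdef A hA1 hA2 ht _ (hx c hc)
  have hne : ∀ t ∈ Set.Icc (0 : ℝ) 1, f t ≠ 0 := by
    intro t ht
    exact aux_det_ne_zero φ hφsymm p Hplus Hminus hcompl hplusdim hnegdef _ y (hxl t ht) hy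
  have hiv := aux_ivt hcont hne
  have hf0 : f 0 = Matrix.det (Matrix.of fun i j => φ (A (x i)) (y j)) := by
    refine congrArg Matrix.det (Matrix.ext fun i j => ?_)
    rw [Matrix.of_apply, Matrix.of_apply, hLapp]
    simp
  have hf1 : f 1 = Matrix.det (Matrix.of fun i j => φ (x i) (y j)) := by
    refine congrArg Matrix.det (Matrix.ext fun i j => ?_)
    rw [Matrix.of_apply, Matrix.of_apply, hLapp]
    simp
  rw [hf0, hf1, mul_comm] at hiv
  exact hiv

end main

theorem stmt_1 {H : Type*} [AddCommGroup H] [Module ℝ H]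
    (φ : LinearMap.BilinForm ℝ H) (hφsymm : ∀ u v, φ u v = φ v u)
    (p : ℕ) (hp : 1 ≤ p)
    (Hplus Hminus : Submodule ℝ H) (hcompl : IsCompl Hplus Hminus)
    (horth : ∀ u ∈ Hplus, ∀ v ∈ Hminus, φ u v = 0)
    (hposdef : ∀ u ∈ Hplus, u ≠ 0 → 0 < φ u u)
    (hplusdim : Module.finrank ℝ Hplus = p)
    (hnegdef : ∀ v ∈ Hminus, v ≠ 0 → φ v v < 0)
    (x y z : Fin p → H)
    (hxli : LinearIndependent ℝ x)
    (hxpos : ∀ v ∈ Submodule.span ℝ (Set.range x), v ≠ 0 → 0 < φ v v)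
    (hyli : LinearIndependent ℝ y)
    (hypos : ∀ v ∈ Submodule.span ℝ (Set.range y), v ≠ 0 → 0 < φ v v)
    (hzli : LinearIndependent ℝ z)
    (hzpos : ∀ v ∈ Submodule.span ℝ (Set.range z), v ≠ 0 → 0 < φ v v)
    (hxy : 0 < Matrix.det (Matrix.of fun i j => φ (x i) (y j)))
    (hxz : 0 < Matrix.det (Matrix.of fun i j => φ (x i) (z j))) :
    0 < Matrix.det (Matrix.of fun i j => φ (y i) (z j)) := by
  haveI : FiniteDimensional ℝ Hplus :=
    FiniteDimensional.of_finrank_pos (by omega : 0 < Module.finrank ℝ Hplus)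
  -- the projection onto Hplus along Hminus, as an endomorphism of H
  set P : H →ₗ[ℝ] Hplus := Hplus.linearProjOfIsCompl Hminus hcompl with hPdef
  set A : H →ₗ[ℝ] H := Hplus.subtype ∘ₗ P with hAdef
  have hA1 : ∀ v, A v ∈ Hplus := fun v => (P v).2
  have hA2 : ∀ v, v - A v ∈ Hminus := by
    intro v
    have h := Submodule.projection_add_projection_eq_self hcompl v
    have : v - A v = ↑(Hminus.linearProjOfIsCompl Hplus hcompl.symm v) := by
      show v - Hplus.projection Hminus hcompl v = Hminus.projection Hplus hcompl.symm v
      rw [sub_eq_iff_eq_add, add_comm]; exact h.symm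
    rw [this]
    exact (Hminus.linearProjOfIsCompl Hplus hcompl.symm v).2
  -- coefficient forms of positivity
  have hcoeff : ∀ (u : Fin p → H), LinearIndependent ℝ u →
      (∀ v ∈ Submodule.span ℝ (Set.range u), v ≠ 0 → 0 < φ v v) →
      ∀ c : Fin p → ℝ, c ≠ 0 → 0 < φ (∑ i, c i • u i) (∑ i, c i • u i) := by
    intro u hli hpos c hc
    have hmem : (∑ i, c i • u i) ∈ Submodule.span ℝ (Set.range u) :=
      Submodule.sum_mem _ fun i _ =>
        Submodule.smul_mem _ _ (Submodule.subset_span (Set.mem_range_self i))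
    have hne : (∑ i, c i • u i) ≠ 0 := fun h0 =>
      hc (funext fun i => Fintype.linearIndependent_iff.mp hli c h0 i)
    exact hpos _ hmem hne
  have hx' := hcoeff x hxli hxpos
  have hy' := hcoeff y hyli hypos
  have hz' := hcoeff z hzli hzpos
  -- a basis of Hplus and the Gram matrix of φ on it
  set b : Module.Basis (Fin p) ℝ Hplus := Module.finBasisOfFinrankEq ℝ Hplus hplusdim with hbdef
  set E : Matrix (Fin p) (Fin p) ℝ :=
    Matrix.of fun k l => φ ((b k : H)) ((b l : H)) with hEdef
  set T : (Fin p → H) → Matrix (Fin p) (Fin p) ℝ :=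
    fun u => Matrix.of fun i k => b.repr (P (u i)) k with hTdef
  have hrep : ∀ v : H, A v = ∑ k, b.repr (P v) k • ((b k : H)) := by
    intro v
    have h := b.sum_repr (P v)
    calc A v = ((P v : Hplus) : H) := rfl
      _ = ((∑ k, b.repr (P v) k • b k : Hplus) : H) := by rw [h]
      _ = ∑ k, b.repr (P v) k • ((b k : H)) := by
          push_cast
          rfl
  -- the Gram matrix between projected tuples factors through E
  have hmat : ∀ u v : Fin p → H,
      (Matrix.of fun i j => φ (A (u i)) (A (v j))) = T u * E * (T v)ᵀ := by
    intro u v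
    ext i j
    have lhs_eq : φ (A (u i)) (A (v j)) =
        ∑ k, ∑ l, b.repr (P (u i)) k * (b.repr (P (v j)) l * φ ((b k : H)) ((b l : H))) := by
      rw [hrep (u i), bilin_sum_left]
      refine Finset.sum_congr rfl fun k _ => ?_
      rw [hrep (v j), bilin_sum_right, Finset.mul_sum]
    rw [Matrix.of_apply, lhs_eq]
    simp only [Matrix.mul_apply, Matrix.transpose_apply, hTdef, hEdef, Matrix.of_apply,
      Finset.sum_mul]
    rw [Finset.sum_comm]
    refine Finset.sum_congr rfl fun k _ => ?_
    refine Finset.sum_congr rfl fun l _ => ?_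
    ring
  -- E is positive definite, so its determinant is positive
  have hbli : LinearIndependent ℝ (fun k => ((b k : H))) := by
    have := b.linearIndependent
    exact this.map' Hplus.subtype (Submodule.ker_subtype Hplus)
  have hE : E.PosDef := by
    rw [Matrix.posDef_iff_dotProduct_mulVec]
    constructor
    · ext k l
      simp only [Matrix.conjTranspose_apply, hEdef, Matrix.of_apply, star_trivial]
      exact hφsymm _ _
    · intro c hc
      have hwne : (∑ k, c k • ((b k : H))) ≠ 0 := fun h0 =>
        hc (funext fun k => Fintype.linearIndependent_iff.mp hbli c h0 k)
      have hwmem : (∑ k, c k • ((b k : H))) ∈ Hplus :=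
        Submodule.sum_mem _ fun k _ => Submodule.smul_mem _ _ (b k).2
      have hpos := hposdef _ hwmem hwne
      have heq : star c ⬝ᵥ E *ᵥ c = φ (∑ k, c k • ((b k : H))) (∑ k, c k • ((b k : H))) := by
        rw [bilin_sum_left]
        simp only [dotProduct, Matrix.mulVec, star_trivial, Pi.star_apply]
        refine Finset.sum_congr rfl fun k _ => ?_
        rw [bilin_sum_right, Finset.mul_sum, Finset.mul_sum]
        refine Finset.sum_congr rfl fun l _ => ?_
        simp only [hEdef, Matrix.of_apply, dotProduct]
        ring
      rw [heq]
      exact hpos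
  have hdetE : 0 < E.det := hE.det_pos
  -- transposition of the Gram determinant
  have htr : ∀ a c : Fin p → H, Matrix.det (Matrix.of fun i j => φ (a i) (c j)) =
      Matrix.det (Matrix.of fun i j => φ (c i) (a j)) := by
    intro a c
    rw [← Matrix.det_transpose]
    refine congrArg Matrix.det (Matrix.ext fun i j => ?_)
    exact hφsymm _ _
  -- positivity is preserved under projection (coefficient form)
  have hAcoeff : ∀ u : Fin p → H,
      (∀ c : Fin p → ℝ, c ≠ 0 → 0 < φ (∑ i, c i • u i) (∑ i, c i • u i)) →
      ∀ c : Fin p → ℝ, c ≠ 0 → 0 < φ (∑ i, c i • A (u i)) (∑ i, c i • A (u i)) := by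
    intro u hu c hc
    have hsum : ∑ i, c i • A (u i) = A (∑ i, c i • u i) := by
      rw [map_sum]
      exact Finset.sum_congr rfl fun i _ => (_root_.map_smul A (c i) (u i)).symm
    rw [hsum]
    have := aux_pt φ hφsymm Hplus Hminus horth hnegdef A hA1 hA2
      (t := 0) ⟨le_refl 0, zero_le_one⟩ _ (hu c hc)
    simpa using this
  -- the key sign formula
  have key : ∀ u v : Fin p → H,
      (∀ c : Fin p → ℝ, c ≠ 0 → 0 < φ (∑ i, c i • u i) (∑ i, c i • u i)) →
      (∀ c : Fin p → ℝ, c ≠ 0 → 0 < φ (∑ i, c i • v i) (∑ i, c i • v i)) →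
      0 < Matrix.det (Matrix.of fun i j => φ (u i) (v j)) *
          ((T v).det * E.det * (T u).det) := by
    intro u v hu hv
    have h1 : 0 < Matrix.det (Matrix.of fun i j => φ (u i) (v j)) *
        Matrix.det (Matrix.of fun i j => φ (A (u i)) (v j)) :=
      aux_deform φ hφsymm p Hplus Hminus hcompl horth hplusdim hnegdef A hA1 hA2 u v hu hv
    have h2 : 0 < Matrix.det (Matrix.of fun i j => φ (v i) (A (u j))) *
        Matrix.det (Matrix.of fun i j => φ (A (v i)) (A (u j))) :=
      aux_deform φ hφsymm p Hplus Hminus hcompl horth hplusdim hnegdef A hA1 hA2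
        v (fun i => A (u i)) hv (hAcoeff u hu)
    rw [htr v (fun i => A (u i))] at h2
    have h3 : Matrix.det (Matrix.of fun i j => φ (A (v i)) (A (u j))) =
        (T v).det * E.det * (T u).det := by
      rw [hmat v u, Matrix.det_mul, Matrix.det_mul, Matrix.det_transpose]
    rw [h3] at h2
    set a := Matrix.det (Matrix.of fun i j => φ (u i) (v j))
    set m := Matrix.det (Matrix.of fun i j => φ (A (u i)) (v j))
    set cc := (T v).det * E.det * (T u).det
    have hm : m ≠ 0 := by
      intro h0
      rw [h0, mul_zero] at h1
      exact lt_irrefl 0 h1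
    nlinarith [h1, h2, mul_self_pos.mpr hm]
  -- assemble
  have Sxy := key x y hx' hy'
  have Sxz := key x z hx' hz'
  have Syz := key y z hy' hz'
  set dx := (T x).det
  set dy := (T y).det
  set dz := (T z).det
  set dE := E.det
  have q1 : 0 < dy * dE * dx := pos_of_pos_mul hxy Sxy
  have q2 : 0 < dz * dE * dx := pos_of_pos_mul hxz Sxz
  have hdx : dx ≠ 0 := by
    intro h0
    rw [h0, mul_zero] at q1
    exact lt_irrefl 0 q1
  have h3 : 0 < (dy * dE * dx) * (dz * dE * dx) := mul_pos q1 q2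
  have h4 : 0 < dx * dx * dE := mul_pos (mul_self_pos.mpr hdx) hdetE
  have h5 : 0 < dz * dE * dy := by
    have hre : (dy * dE * dx) * (dz * dE * dx) = (dx * dx * dE) * (dz * dE * dy) := by ring
    rw [hre] at h3
    exact pos_of_pos_mul h4 h3
  exact pos_of_pos_mul h5 (by rw [mul_comm] at Syz; exact Syz)
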